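/- Let P⁺ and P⁻ be finite sets of propositional variables and let M0 and M1 be finite Kripke models with worlds x0, x1 such that x0 R0 y for every world y of M0 and x1 R1 y for every world y of M1. Suppose M0 has exactly two clusters C0⁰, C0¹ of final worlds and M1 has exactly two clusters of final worlds. If (M0,x0) →₃^{(P⁺,P⁻)} (M1,x1), then there exist distinct clusters D1⁰ and D1¹ of final worlds of M1 such that C0⁰ matches D1⁰ and C0¹ matches D1¹. -/

import Mathlib

/-- Modal formulas over countably many variables. -/
inductive ModalForm : Type where
  | var : ℕ → ModalForm
  | bot : ModalForm
  | and : ModalForm → ModalForm → ModalForm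
  | or : ModalForm → ModalForm → ModalForm
  | not : ModalForm → ModalForm
  | imp : ModalForm → ModalForm → ModalForm
  | box : ModalForm → ModalForm

namespace ModalForm

mutual
  /-- positively occurring variables -/
  def vpos : ModalForm → Finset ℕ
    | var p => {p}
    | bot => ∅
    | and φ ψ => vpos φ ∪ vpos ψ
    | or φ ψ => vpos φ ∪ vpos ψ
    | not φ => vneg φ
    | imp φ ψ => vneg φ ∪ vpos ψ
    | box φ => vpos φ
  /-- negatively occurring variables -/
  def vneg : ModalForm → Finset ℕ
    | var _ => ∅
    | bot => ∅
    | and φ ψ => vneg φ ∪ vneg ψ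
    | or φ ψ => vneg φ ∪ vneg ψ
    | not φ => vpos φ
    | imp φ ψ => vpos φ ∪ vneg ψ
    | box φ => vneg φ
end

/-- Modal depth: maximal nesting of `□`. -/
def depth : ModalForm → ℕ
  | var _ => 0
  | bot => 0
  | and φ ψ => max (depth φ) (depth ψ)
  | or φ ψ => max (depth φ) (depth ψ)
  | not φ => depth φ
  | imp φ ψ => max (depth φ) (depth ψ)
  | box φ => depth φ + 1

/-- `◇φ := ¬□¬φ` -/
def dia (φ : ModalForm) : ModalForm := not (box (not φ))

/-- `⊤ := ¬⊥` -/
def top : ModalForm := not bot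

end ModalForm

/-- An S4 Kripke frame: nonempty set of worlds with a reflexive transitive relation. -/
structure KFrame : Type 1 where
  W : Type
  R : W → W → Prop
  nonempty : Nonempty W
  refl : ∀ x, R x x
  trans : ∀ x y z, R x y → R y z → R x z

/-- A Kripke model: a frame with a valuation. -/
structure KModel : Type 1 extends KFrame where
  val : W → ℕ → Prop

/-- The model based on frame `F` with valuation `V`. -/
def KFrame.toModel (F : KFrame) (V : F.W → ℕ → Prop) : KModel :=
  { toKFrame := F, val := V }

/-- Satisfaction in a Kripke model. -/
def KModel.Sat (M : KModel) : M.W → ModalForm → Prop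
  | w, .var p => M.val w p
  | _, .bot => False
  | w, .and φ ψ => M.Sat w φ ∧ M.Sat w ψ
  | w, .or φ ψ => M.Sat w φ ∨ M.Sat w ψ
  | w, .not φ => ¬ M.Sat w φ
  | w, .imp φ ψ => M.Sat w φ → M.Sat w ψ
  | w, .box φ => ∀ y, M.R w y → M.Sat y φ

/-- `(M0,w0) →ₙ^{(P⁺,P⁻)} (M1,w1)`: every `(P⁺,P⁻)`-formula of depth ≤ n
satisfied at `(M0,w0)` is satisfied at `(M1,w1)`. -/
def ModalArrow (Pp Pm : Finset ℕ) (n : ℕ) (M0 : KModel) (w0 : M0.W)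
    (M1 : KModel) (w1 : M1.W) : Prop :=
  ∀ φ : ModalForm, φ.vpos ⊆ Pp → φ.vneg ⊆ Pm → φ.depth ≤ n →
    M0.Sat w0 φ → M1.Sat w1 φ

/-- p-morphism between frames. -/
def PMorphism (F G : KFrame) (f : F.W → G.W) : Prop :=
  (∀ x y, F.R x y → G.R (f x) (f y)) ∧
  (∀ x w, G.R (f x) w → ∃ z, F.R x z ∧ f z = w)

/-- The class `C` of Kripke models enjoys `n`-IP. -/
def EnjoysIP (C : Set KModel) (n : ℕ) : Prop :=
  ∀ (Pp Pm : Finset ℕ) (M0 M1 : KModel), M0 ∈ C → M1 ∈ C →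
    ∀ (w0 : M0.W) (w1 : M1.W), ModalArrow Pp Pm n M0 w0 M1 w1 →
      ∃ (F : KFrame) (wstar : F.W) (f0 : F.W → M0.W) (f1 : F.W → M1.W),
        (∀ V : F.W → ℕ → Prop, F.toModel V ∈ C) ∧
        PMorphism F M0.toKFrame f0 ∧
        PMorphism F M1.toKFrame f1 ∧
        f0 wstar = w0 ∧ f1 wstar = w1 ∧
        ∀ x : F.W, ModalArrow Pp Pm 0 M0 (f0 x) M1 (f1 x)

/-- A world is final iff every successor is also a predecessor. -/
def KModel.Final (M : KModel) (w : M.W) : Prop := ∀ y, M.R w y → M.R y w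

/-- The cluster of a world. -/
def KModel.cluster (M : KModel) (w : M.W) : Set M.W := {u | M.R w u ∧ M.R u w}

/-- Cluster `C0` of `M0` matches cluster `C1` of `M1`. -/
def Matches (Pp Pm : Finset ℕ) (M0 M1 : KModel) (C0 : Set M0.W) (C1 : Set M1.W) : Prop :=
  (∀ u0 ∈ C0, ∃ u1 ∈ C1, ModalArrow Pp Pm 0 M0 u0 M1 u1) ∧
  (∀ u1 ∈ C1, ∃ u0 ∈ C0, ModalArrow Pp Pm 0 M0 u0 M1 u1)

/-- `φ` is satisfied at every world of every model in `C`. -/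
def ValidOn (C : Set KModel) (φ : ModalForm) : Prop :=
  ∀ M ∈ C, ∀ w : M.W, M.Sat w φ


open ModalForm

/-! ### Basic list connectives -/

def conjL : List ModalForm → ModalForm
  | [] => .not .bot
  | φ :: l => .and φ (conjL l)

def disjL : List ModalForm → ModalForm
  | [] => .bot
  | φ :: l => .or φ (disjL l)

lemma sat_conjL (M : KModel) (w : M.W) (l : List ModalForm) :
    M.Sat w (conjL l) ↔ ∀ φ ∈ l, M.Sat w φ := by
  induction l with
  | nil => simp [conjL, KModel.Sat]
  | cons φ l ih => simp [conjL, KModel.Sat, ih]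

lemma sat_disjL (M : KModel) (w : M.W) (l : List ModalForm) :
    M.Sat w (disjL l) ↔ ∃ φ ∈ l, M.Sat w φ := by
  induction l with
  | nil => simp [disjL, KModel.Sat]
  | cons φ l ih => simp [disjL, KModel.Sat, ih]

lemma depth_conjL (l : List ModalForm) (n : ℕ) (h : ∀ φ ∈ l, φ.depth ≤ n) :
    (conjL l).depth ≤ n := by
  induction l with
  | nil => simp [conjL, depth]
  | cons φ l ih =>
      simp only [conjL, depth, max_le_iff]
      exact ⟨h φ (by simp), ih fun ψ hψ => h ψ (by simp [hψ])⟩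

lemma depth_disjL (l : List ModalForm) (n : ℕ) (h : ∀ φ ∈ l, φ.depth ≤ n) :
    (disjL l).depth ≤ n := by
  induction l with
  | nil => simp [disjL, depth]
  | cons φ l ih =>
      simp only [disjL, depth, max_le_iff]
      exact ⟨h φ (by simp), ih fun ψ hψ => h ψ (by simp [hψ])⟩

lemma vpos_conjL (l : List ModalForm) (S : Finset ℕ) (h : ∀ φ ∈ l, φ.vpos ⊆ S) :
    (conjL l).vpos ⊆ S := by
  induction l with
  | nil => simp [conjL, vpos, vneg]
  | cons φ l ih =>
      simp only [conjL, vpos, Finset.union_subset_iff]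
      exact ⟨h φ (by simp), ih fun ψ hψ => h ψ (by simp [hψ])⟩

lemma vneg_conjL (l : List ModalForm) (S : Finset ℕ) (h : ∀ φ ∈ l, φ.vneg ⊆ S) :
    (conjL l).vneg ⊆ S := by
  induction l with
  | nil => simp [conjL, vpos, vneg]
  | cons φ l ih =>
      simp only [conjL, vneg, Finset.union_subset_iff]
      exact ⟨h φ (by simp), ih fun ψ hψ => h ψ (by simp [hψ])⟩

lemma vpos_disjL (l : List ModalForm) (S : Finset ℕ) (h : ∀ φ ∈ l, φ.vpos ⊆ S) :
    (disjL l).vpos ⊆ S := by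
  induction l with
  | nil => simp [disjL, vpos]
  | cons φ l ih =>
      simp only [disjL, vpos, Finset.union_subset_iff]
      exact ⟨h φ (by simp), ih fun ψ hψ => h ψ (by simp [hψ])⟩

lemma vneg_disjL (l : List ModalForm) (S : Finset ℕ) (h : ∀ φ ∈ l, φ.vneg ⊆ S) :
    (disjL l).vneg ⊆ S := by
  induction l with
  | nil => simp [disjL, vneg]
  | cons φ l ih =>
      simp only [disjL, vneg, Finset.union_subset_iff]
      exact ⟨h φ (by simp), ih fun ψ hψ => h ψ (by simp [hψ])⟩

lemma sat_dia (M : KModel) (w : M.W) (φ : ModalForm) :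
    M.Sat w φ.dia ↔ ∃ v, M.R w v ∧ M.Sat v φ := by
  simp only [dia, KModel.Sat]
  push_neg
  tauto

lemma depth_dia (φ : ModalForm) : φ.dia.depth = φ.depth + 1 := by
  simp [dia, depth]

lemma vpos_dia (φ : ModalForm) : φ.dia.vpos = φ.vpos := by
  simp [dia, vpos, vneg]

lemma vneg_dia (φ : ModalForm) : φ.dia.vneg = φ.vneg := by
  simp [dia, vpos, vneg]
/-! ### 0-types -/

open Classical in
/-- positive 0-type of a world -/
noncomputable def typeP (Pp Pm : Finset ℕ) (M : KModel) (u : M.W) : ModalForm :=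
  conjL (Pp.toList.map (fun p => if M.val u p then .var p else .not .bot) ++
    Pm.toList.map (fun p => if M.val u p then .not .bot else .not (.var p)))

open Classical in
/-- negative (anti) 0-type of a world -/
noncomputable def typeN (Pp Pm : Finset ℕ) (M : KModel) (u : M.W) : ModalForm :=
  conjL (Pm.toList.map (fun p => if M.val u p then .var p else .not .bot) ++
    Pp.toList.map (fun p => if M.val u p then .not .bot else .not (.var p)))

lemma depth_typeP (Pp Pm : Finset ℕ) (M : KModel) (u : M.W) : (typeP Pp Pm M u).depth ≤ 0 := by
  apply depth_conjL
  intro φ hφ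
  simp only [List.mem_append, List.mem_map] at hφ
  rcases hφ with ⟨p, _, rfl⟩ | ⟨p, _, rfl⟩ <;> split <;> simp [ModalForm.depth]

lemma depth_typeN (Pp Pm : Finset ℕ) (M : KModel) (u : M.W) : (typeN Pp Pm M u).depth ≤ 0 :=
  depth_typeP Pm Pp M u

lemma vpos_typeP (Pp Pm : Finset ℕ) (M : KModel) (u : M.W) : (typeP Pp Pm M u).vpos ⊆ Pp := by
  apply vpos_conjL
  intro φ hφ
  simp only [List.mem_append, List.mem_map] at hφ
  rcases hφ with ⟨p, hp, rfl⟩ | ⟨p, hp, rfl⟩ <;> split <;>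
    simp_all [ModalForm.vpos, ModalForm.vneg, Finset.mem_toList]

lemma vneg_typeP (Pp Pm : Finset ℕ) (M : KModel) (u : M.W) : (typeP Pp Pm M u).vneg ⊆ Pm := by
  apply vneg_conjL
  intro φ hφ
  simp only [List.mem_append, List.mem_map] at hφ
  rcases hφ with ⟨p, hp, rfl⟩ | ⟨p, hp, rfl⟩ <;> split <;>
    simp_all [ModalForm.vpos, ModalForm.vneg, Finset.mem_toList]

lemma vpos_typeN (Pp Pm : Finset ℕ) (M : KModel) (u : M.W) : (typeN Pp Pm M u).vpos ⊆ Pm :=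
  vpos_typeP Pm Pp M u

lemma vneg_typeN (Pp Pm : Finset ℕ) (M : KModel) (u : M.W) : (typeN Pp Pm M u).vneg ⊆ Pp :=
  vneg_typeP Pm Pp M u

/-- satisfaction of `typeP` in another model -/
lemma sat_typeP_iff (Pp Pm : Finset ℕ) (M N : KModel) (u : M.W) (w : N.W) :
    N.Sat w (typeP Pp Pm M u) ↔
      (∀ p ∈ Pp, M.val u p → N.val w p) ∧ (∀ p ∈ Pm, N.val w p → M.val u p) := by
  classical
  rw [typeP, sat_conjL]
  constructor
  · intro h
    constructor
    · intro p hp hval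
      have := h (if M.val u p then .var p else .not .bot)
        (by simp only [List.mem_append, List.mem_map]; exact Or.inl ⟨p, by simp [hp], rfl⟩)
      rw [if_pos hval] at this
      exact this
    · intro p hp hval
      have := h (if M.val u p then .not .bot else .not (.var p))
        (by simp only [List.mem_append, List.mem_map]; exact Or.inr ⟨p, by simp [hp], rfl⟩)
      by_contra hnot
      rw [if_neg hnot] at this
      exact this hval
  · rintro ⟨h1, h2⟩ φ hφ
    simp only [List.mem_append, List.mem_map] at hφ
    rcases hφ with ⟨p, hp, rfl⟩ | ⟨p, hp, rfl⟩
    · rw [Finset.mem_toList] at hp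
      split
      · exact h1 p hp ‹_›
      · simp [KModel.Sat]
    · rw [Finset.mem_toList] at hp
      split
      · simp [KModel.Sat]
      · intro hval
        exact ‹¬ M.val u p› (h2 p hp hval)

lemma sat_typeP_self (Pp Pm : Finset ℕ) (M : KModel) (u : M.W) :
    M.Sat u (typeP Pp Pm M u) := by
  rw [sat_typeP_iff]
  exact ⟨fun _ _ h => h, fun _ _ h => h⟩

lemma sat_typeN_iff (Pp Pm : Finset ℕ) (M N : KModel) (u : M.W) (w : N.W) :
    N.Sat w (typeN Pp Pm M u) ↔
      (∀ p ∈ Pm, M.val u p → N.val w p) ∧ (∀ p ∈ Pp, N.val w p → M.val u p) :=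
  sat_typeP_iff Pm Pp M N u w

lemma sat_typeN_self (Pp Pm : Finset ℕ) (M : KModel) (u : M.W) :
    M.Sat u (typeN Pp Pm M u) :=
  sat_typeP_self Pm Pp M u

/-- depth-0 transfer from atomic conditions -/
lemma arrow0_of_atoms (Pp Pm : Finset ℕ) (M0 M1 : KModel) (u : M0.W) (w : M1.W)
    (hp : ∀ p ∈ Pp, M0.val u p → M1.val w p) (hm : ∀ p ∈ Pm, M1.val w p → M0.val u p) :
    ModalArrow Pp Pm 0 M0 u M1 w := by
  have key : ∀ φ : ModalForm, φ.depth ≤ 0 →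
      ((φ.vpos ⊆ Pp → φ.vneg ⊆ Pm → M0.Sat u φ → M1.Sat w φ) ∧
       (φ.vpos ⊆ Pm → φ.vneg ⊆ Pp → M1.Sat w φ → M0.Sat u φ)) := by
    intro φ
    induction φ with
    | var p =>
        intro _
        constructor
        · intro h1 _ hs
          exact hp p (h1 (by simp [ModalForm.vpos])) hs
        · intro h1 _ hs
          exact hm p (h1 (by simp [ModalForm.vpos])) hs
    | bot => intro _; simp [KModel.Sat]
    | and φ ψ ihφ ihψ =>
        intro hd
        simp only [ModalForm.depth, max_le_iff] at hd
        simp only [ModalForm.vpos, ModalForm.vneg, Finset.union_subset_iff, KModel.Sat]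
        obtain ⟨ihφ1, ihφ2⟩ := ihφ hd.1
        obtain ⟨ihψ1, ihψ2⟩ := ihψ hd.2
        constructor
        · rintro ⟨a, b⟩ ⟨c, d⟩ ⟨s1, s2⟩; exact ⟨ihφ1 a c s1, ihψ1 b d s2⟩
        · rintro ⟨a, b⟩ ⟨c, d⟩ ⟨s1, s2⟩; exact ⟨ihφ2 a c s1, ihψ2 b d s2⟩
    | or φ ψ ihφ ihψ =>
        intro hd
        simp only [ModalForm.depth, max_le_iff] at hd
        simp only [ModalForm.vpos, ModalForm.vneg, Finset.union_subset_iff, KModel.Sat]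
        obtain ⟨ihφ1, ihφ2⟩ := ihφ hd.1
        obtain ⟨ihψ1, ihψ2⟩ := ihψ hd.2
        constructor
        · rintro ⟨a, b⟩ ⟨c, d⟩ (s | s)
          · exact Or.inl (ihφ1 a c s)
          · exact Or.inr (ihψ1 b d s)
        · rintro ⟨a, b⟩ ⟨c, d⟩ (s | s)
          · exact Or.inl (ihφ2 a c s)
          · exact Or.inr (ihψ2 b d s)
    | not φ ihφ =>
        intro hd
        simp only [ModalForm.depth] at hd
        simp only [ModalForm.vpos, ModalForm.vneg, KModel.Sat]
        obtain ⟨ihφ1, ihφ2⟩ := ihφ hd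
        constructor
        · intro a b hs hc; exact hs (ihφ2 b a hc)
        · intro a b hs hc; exact hs (ihφ1 b a hc)
    | imp φ ψ ihφ ihψ =>
        intro hd
        simp only [ModalForm.depth, max_le_iff] at hd
        simp only [ModalForm.vpos, ModalForm.vneg, Finset.union_subset_iff, KModel.Sat]
        obtain ⟨ihφ1, ihφ2⟩ := ihφ hd.1
        obtain ⟨ihψ1, ihψ2⟩ := ihψ hd.2
        constructor
        · rintro ⟨a, b⟩ ⟨c, d⟩ hs hφ1
          exact ihψ1 b d (hs (ihφ2 c a hφ1))
        · rintro ⟨a, b⟩ ⟨c, d⟩ hs hφ0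
          exact ihψ2 b d (hs (ihφ1 c a hφ0))
    | box φ _ =>
        intro hd
        simp [ModalForm.depth] at hd
  intro φ h1 h2 h3 h4
  exact (key φ h3).1 h1 h2 h4
/-! ### Clusters and final worlds -/

lemma cluster_eq_of_mem (M : KModel) {a b : M.W} (h : b ∈ M.cluster a) :
    M.cluster a = M.cluster b := by
  obtain ⟨h1, h2⟩ := h
  ext u
  constructor
  · rintro ⟨hu1, hu2⟩
    exact ⟨M.trans _ _ _ h2 hu1, M.trans _ _ _ hu2 h1⟩
  · rintro ⟨hu1, hu2⟩
    exact ⟨M.trans _ _ _ h1 hu1, M.trans _ _ _ hu2 h2⟩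

lemma mem_cluster_self (M : KModel) (a : M.W) : a ∈ M.cluster a :=
  ⟨M.refl a, M.refl a⟩

lemma final_of_mem_cluster (M : KModel) {a b : M.W} (ha : M.Final a) (h : b ∈ M.cluster a) :
    M.Final b := by
  intro y hy
  exact M.trans _ _ _ (ha y (M.trans _ _ _ h.1 hy)) h.1

lemma succ_eq_cluster_of_final (M : KModel) {a y : M.W} (ha : M.Final a) (h : M.R a y) :
    y ∈ M.cluster a := ⟨h, ha y h⟩

/-- In a finite model, every world sees a final world. -/
lemma exists_final_succ (M : KModel) (hf : Finite M.W) (v : M.W) :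
    ∃ f, M.R v f ∧ M.Final f := by
  let r : M.W → M.W → Prop := fun a b => M.R b a ∧ ¬ M.R a b
  have : IsTrans M.W r := ⟨by
    rintro a b c ⟨h1, h2⟩ ⟨h3, h4⟩
    refine ⟨M.trans _ _ _ h3 h1, fun hac => h4 (M.trans _ _ _ h1 hac)⟩⟩
  have : IsIrrefl M.W r := ⟨by rintro a ⟨h1, h2⟩; exact h2 h1⟩
  have hwf : WellFounded r := Finite.wellFounded_of_trans_of_irrefl r
  obtain ⟨m, hm, hmin⟩ := hwf.has_min {w | M.R v w} ⟨v, M.refl v⟩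
  refine ⟨m, hm, ?_⟩
  intro y hy
  have hyv : M.R v y := M.trans _ _ _ hm hy
  by_contra hnot
  exact hmin y hyv ⟨hy, hnot⟩

open Classical in
noncomputable def clusterList (M : KModel) [Fintype M.W] (c : M.W) : List M.W :=
  (Finset.univ.filter (fun u => M.R c u ∧ M.R u c)).toList

lemma mem_clusterList (M : KModel) [Fintype M.W] (c u : M.W) :
    u ∈ clusterList M c ↔ u ∈ M.cluster c := by
  classical
  simp [clusterList, KModel.cluster]

open Classical in
noncomputable def finalList (M : KModel) [Fintype M.W] : List M.W :=
  (Finset.univ.filter M.Final).toList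

lemma mem_finalList (M : KModel) [Fintype M.W] (u : M.W) :
    u ∈ finalList M ↔ M.Final u := by
  classical
  simp [finalList]
/-! ### The cluster formula β -/

noncomputable def betaF (Pp Pm : Finset ℕ) (M : KModel) [Fintype M.W] (c : M.W) : ModalForm :=
  .and (conjL ((clusterList M c).map (fun u => (typeP Pp Pm M u).dia)))
       (.box (disjL ((clusterList M c).map (typeP Pp Pm M))))

lemma depth_betaF (Pp Pm : Finset ℕ) (M : KModel) [Fintype M.W] (c : M.W) :
    (betaF Pp Pm M c).depth ≤ 1 := by
  simp only [betaF, ModalForm.depth, max_le_iff]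
  refine ⟨depth_conjL _ _ ?_, ?_⟩
  · intro φ hφ
    simp only [List.mem_map] at hφ
    obtain ⟨u, _, rfl⟩ := hφ
    rw [depth_dia]
    exact Nat.succ_le_succ (depth_typeP Pp Pm M u)
  · have : (disjL ((clusterList M c).map (typeP Pp Pm M))).depth ≤ 0 := by
      apply depth_disjL
      intro φ hφ
      simp only [List.mem_map] at hφ
      obtain ⟨u, _, rfl⟩ := hφ
      exact depth_typeP Pp Pm M u
    omega

lemma vpos_betaF (Pp Pm : Finset ℕ) (M : KModel) [Fintype M.W] (c : M.W) :
    (betaF Pp Pm M c).vpos ⊆ Pp := by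
  simp only [betaF, ModalForm.vpos, Finset.union_subset_iff]
  constructor
  · apply vpos_conjL
    intro φ hφ
    simp only [List.mem_map] at hφ
    obtain ⟨u, _, rfl⟩ := hφ
    rw [vpos_dia]
    exact vpos_typeP Pp Pm M u
  · apply vpos_disjL
    intro φ hφ
    simp only [List.mem_map] at hφ
    obtain ⟨u, _, rfl⟩ := hφ
    exact vpos_typeP Pp Pm M u

lemma vneg_betaF (Pp Pm : Finset ℕ) (M : KModel) [Fintype M.W] (c : M.W) :
    (betaF Pp Pm M c).vneg ⊆ Pm := by
  simp only [betaF, ModalForm.vneg, Finset.union_subset_iff]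
  constructor
  · apply vneg_conjL
    intro φ hφ
    simp only [List.mem_map] at hφ
    obtain ⟨u, _, rfl⟩ := hφ
    rw [vneg_dia]
    exact vneg_typeP Pp Pm M u
  · apply vneg_disjL
    intro φ hφ
    simp only [List.mem_map] at hφ
    obtain ⟨u, _, rfl⟩ := hφ
    exact vneg_typeP Pp Pm M u

lemma sat_betaF_iff (Pp Pm : Finset ℕ) (M N : KModel) [Fintype M.W] (c : M.W) (w : N.W) :
    N.Sat w (betaF Pp Pm M c) ↔
      ((∀ u ∈ M.cluster c, ∃ v, N.R w v ∧ N.Sat v (typeP Pp Pm M u)) ∧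
       (∀ v, N.R w v → ∃ u ∈ M.cluster c, N.Sat v (typeP Pp Pm M u))) := by
  simp only [betaF, KModel.Sat, sat_conjL, sat_disjL, List.mem_map]
  constructor
  · rintro ⟨h1, h2⟩
    constructor
    · intro u hu
      have := h1 _ ⟨u, (mem_clusterList M c u).2 hu, rfl⟩
      rw [sat_dia] at this
      exact this
    · intro v hv
      obtain ⟨_, ⟨u, hu, rfl⟩, hsat⟩ := h2 v hv
      exact ⟨u, (mem_clusterList M c u).1 hu, hsat⟩
  · rintro ⟨h1, h2⟩
    constructor
    · rintro φ ⟨u, hu, rfl⟩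
      rw [sat_dia]
      exact h1 u ((mem_clusterList M c u).1 hu)
    · intro v hv
      obtain ⟨u, hu, hsat⟩ := h2 v hv
      exact ⟨_, ⟨u, (mem_clusterList M c u).2 hu, rfl⟩, hsat⟩

/-- Every member of a final cluster satisfies the cluster's β in its own model. -/
lemma sat_betaF_self (Pp Pm : Finset ℕ) (M : KModel) [Fintype M.W] (c : M.W)
    (hc : M.Final c) (w : M.W) (hw : w ∈ M.cluster c) :
    M.Sat w (betaF Pp Pm M c) := by
  rw [sat_betaF_iff]
  constructor
  · intro u hu
    refine ⟨u, ?_, sat_typeP_self Pp Pm M u⟩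
    exact M.trans _ _ _ hw.2 hu.1
  · intro v hv
    have hvc : v ∈ M.cluster c := by
      have : M.R c v := M.trans _ _ _ hw.1 hv
      exact succ_eq_cluster_of_final M hc this
    exact ⟨v, hvc, sat_typeP_self Pp Pm M v⟩

/-- If a final world `f` of `N` satisfies `betaF` of a cluster of `M`,
the clusters match. -/
lemma matches_of_sat_betaF (Pp Pm : Finset ℕ) (M N : KModel) [Fintype M.W] (c : M.W)
    (f : N.W) (hf : N.Final f) (hsat : N.Sat f (betaF Pp Pm M c)) :
    Matches Pp Pm M N (M.cluster c) (N.cluster f) := by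
  rw [sat_betaF_iff] at hsat
  obtain ⟨h1, h2⟩ := hsat
  constructor
  · intro u0 hu0
    obtain ⟨v, hv, hsat⟩ := h1 u0 hu0
    refine ⟨v, succ_eq_cluster_of_final N hf hv, ?_⟩
    rw [sat_typeP_iff] at hsat
    exact arrow0_of_atoms Pp Pm M N u0 v hsat.1 hsat.2
  · intro u1 hu1
    obtain ⟨u0, hu0, hsat⟩ := h2 u1 hu1.1
    refine ⟨u0, hu0, ?_⟩
    rw [sat_typeP_iff] at hsat
    exact arrow0_of_atoms Pp Pm M N u0 u1 hsat.1 hsat.2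
/-! ### Sat unfolding lemmas -/

lemma sat_not (M : KModel) (w : M.W) (φ : ModalForm) :
    M.Sat w φ.not ↔ ¬ M.Sat w φ := Iff.rfl
lemma sat_and (M : KModel) (w : M.W) (φ ψ : ModalForm) :
    M.Sat w (φ.and ψ) ↔ M.Sat w φ ∧ M.Sat w ψ := Iff.rfl
lemma sat_or (M : KModel) (w : M.W) (φ ψ : ModalForm) :
    M.Sat w (φ.or ψ) ↔ M.Sat w φ ∨ M.Sat w ψ := Iff.rfl
lemma sat_imp (M : KModel) (w : M.W) (φ ψ : ModalForm) :
    M.Sat w (φ.imp ψ) ↔ (M.Sat w φ → M.Sat w ψ) := Iff.rfl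
lemma sat_box (M : KModel) (w : M.W) (φ : ModalForm) :
    M.Sat w φ.box ↔ ∀ v, M.R w v → M.Sat v φ := Iff.rfl

/-! ### The key extraction lemma -/

lemma chi_extract (Pp Pm : Finset ℕ) (M0 M1 : KModel)
    (x0 : M0.W) (x1 : M1.W) (h0 : ∀ y : M0.W, M0.R x0 y)
    (c : M0.W) (hc : M0.Final c)
    (h : ModalArrow Pp Pm 3 M0 x0 M1 x1)
    (hM1fin : Finite M1.W)
    (A D : ModalForm)
    (hApos : A.vpos ⊆ Pp) (hAneg : A.vneg ⊆ Pm) (hAd : A.depth ≤ 1)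
    (hDpos : D.vpos ⊆ Pm) (hDneg : D.vneg ⊆ Pp) (hDd : D.depth ≤ 0)
    (hsatA : ∀ w ∈ M0.cluster c, M0.Sat w A)
    (hsatD : ∀ f : M1.W, M1.Final f → M1.Sat f D) :
    ∃ f : M1.W, M1.Final f ∧ M1.Sat f A := by
  let χ : ModalForm := .not (.box (.imp A (.dia (.and (.not A) (.box D)))))
  have hvpos : χ.vpos ⊆ Pp := by
    show (ModalForm.not (.box (.imp A (.dia (.and (.not A) (.box D)))))).vpos ⊆ Pp
    simp only [ModalForm.vpos, ModalForm.vneg, vneg_dia, Finset.union_subset_iff]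
    exact ⟨hApos, hApos, hDneg⟩
  have hvneg : χ.vneg ⊆ Pm := by
    show (ModalForm.not (.box (.imp A (.dia (.and (.not A) (.box D)))))).vneg ⊆ Pm
    simp only [ModalForm.vpos, ModalForm.vneg, vpos_dia, Finset.union_subset_iff]
    exact ⟨hAneg, hAneg, hDpos⟩
  have hdepth : χ.depth ≤ 3 := by
    show (ModalForm.not (.box (.imp A (.dia (.and (.not A) (.box D)))))).depth ≤ 3
    simp only [ModalForm.depth, depth_dia]
    omega
  have hsat0 : M0.Sat x0 χ := by
    show ¬ _
    rw [sat_box]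
    intro hbox
    have hc' := hbox c (h0 c)
    rw [sat_imp] at hc'
    have hsA : M0.Sat c A := hsatA c (mem_cluster_self M0 c)
    have hdia := hc' hsA
    rw [sat_dia] at hdia
    obtain ⟨s, hs, hsρ⟩ := hdia
    have hsc : s ∈ M0.cluster c := succ_eq_cluster_of_final M0 hc hs
    rw [sat_and, sat_not] at hsρ
    exact hsρ.1 (hsatA s hsc)
  have hsat1 : M1.Sat x1 χ := h χ hvpos hvneg hdepth hsat0
  have hsat1' : ¬ M1.Sat x1 (ModalForm.box (.imp A (.dia (.and (.not A) (.box D))))) := hsat1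
  rw [sat_box] at hsat1'
  push_neg at hsat1'
  obtain ⟨v, hvx, hv⟩ := hsat1'
  rw [sat_imp] at hv
  rw [Classical.not_imp] at hv
  obtain ⟨hvA, hvnd⟩ := hv
  rw [sat_dia] at hvnd
  push_neg at hvnd
  obtain ⟨f, hvf, hffin⟩ := exists_final_succ M1 hM1fin v
  refine ⟨f, hffin, ?_⟩
  have hnρ := hvnd f hvf
  rw [sat_and, sat_not] at hnρ
  by_contra hnA
  apply hnρ
  refine ⟨fun hAA => hnA hAA, ?_⟩
  rw [sat_box]
  intro g hg
  exact hsatD g (final_of_mem_cluster M1 hffin (succ_eq_cluster_of_final M1 hffin hg))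

lemma exists_final_sat_betaF (Pp Pm : Finset ℕ) (M0 M1 : KModel)
    [Fintype M0.W] [Fintype M1.W]
    (x0 : M0.W) (x1 : M1.W) (h0 : ∀ y : M0.W, M0.R x0 y)
    (c : M0.W) (hc : M0.Final c)
    (h : ModalArrow Pp Pm 3 M0 x0 M1 x1) :
    ∃ f : M1.W, M1.Final f ∧ M1.Sat f (betaF Pp Pm M0 c) := by
  apply chi_extract Pp Pm M0 M1 x0 x1 h0 c hc h (Finite.of_fintype M1.W)
    (betaF Pp Pm M0 c) (disjL ((finalList M1).map (typeN Pp Pm M1)))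
    (vpos_betaF Pp Pm M0 c) (vneg_betaF Pp Pm M0 c) (depth_betaF Pp Pm M0 c)
  · apply vpos_disjL
    intro φ hφ
    simp only [List.mem_map] at hφ
    obtain ⟨u, _, rfl⟩ := hφ
    exact vpos_typeN Pp Pm M1 u
  · apply vneg_disjL
    intro φ hφ
    simp only [List.mem_map] at hφ
    obtain ⟨u, _, rfl⟩ := hφ
    exact vneg_typeN Pp Pm M1 u
  · apply depth_disjL
    intro φ hφ
    simp only [List.mem_map] at hφ
    obtain ⟨u, _, rfl⟩ := hφ
    exact depth_typeN Pp Pm M1 u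
  · exact fun w hw => sat_betaF_self Pp Pm M0 c hc w hw
  · intro f hf
    rw [sat_disjL]
    exact ⟨typeN Pp Pm M1 f, List.mem_map_of_mem ((mem_finalList M1 f).2 hf),
      sat_typeN_self Pp Pm M1 f⟩
lemma psi_extract_gen (Pp Pm : Finset ℕ) (M0 M1 : KModel)
    (hf0 : Finite M0.W)
    (x0 : M0.W) (x1 : M1.W) (h1 : ∀ y : M1.W, M1.R x1 y)
    (h : ModalArrow Pp Pm 3 M0 x0 M1 x1)
    (B0 B1 : ModalForm)
    (hp0 : B0.vpos ⊆ Pp) (hn0 : B0.vneg ⊆ Pm) (hd0 : B0.depth ≤ 1)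
    (hp1 : B1.vpos ⊆ Pp) (hn1 : B1.vneg ⊆ Pm) (hd1 : B1.depth ≤ 1)
    (hsat : ∀ u : M0.W, M0.Final u → M0.Sat u B0 ∨ M0.Sat u B1)
    (f1 : M1.W) (hf1 : M1.Final f1) :
    ∃ a ∈ M1.cluster f1, M1.Sat a B0 ∨ M1.Sat a B1 := by
  have hvpos : (ModalForm.box (.dia (.or B0 B1))).vpos ⊆ Pp := by
    simp only [ModalForm.dia, ModalForm.vpos, ModalForm.vneg, Finset.union_subset_iff]
    exact ⟨hp0, hp1⟩
  have hvneg : (ModalForm.box (.dia (.or B0 B1))).vneg ⊆ Pm := by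
    simp only [ModalForm.dia, ModalForm.vpos, ModalForm.vneg, Finset.union_subset_iff]
    exact ⟨hn0, hn1⟩
  have hdepth : (ModalForm.box (.dia (.or B0 B1))).depth ≤ 3 := by
    simp only [ModalForm.dia, ModalForm.depth]
    omega
  have hsat0 : M0.Sat x0 (ModalForm.box (.dia (.or B0 B1))) := by
    rw [sat_box]
    intro w _
    rw [sat_dia]
    obtain ⟨u, hwu, hufin⟩ := exists_final_succ M0 hf0 w
    exact ⟨u, hwu, (sat_or M0 u B0 B1).2 (hsat u hufin)⟩
  have hsat1 := h _ hvpos hvneg hdepth hsat0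
  rw [sat_box] at hsat1
  have hd := hsat1 f1 (h1 f1)
  rw [sat_dia] at hd
  obtain ⟨a, hfa, ha⟩ := hd
  rw [sat_or] at ha
  exact ⟨a, succ_eq_cluster_of_final M1 hf1 hfa, ha⟩

theorem stmt7 (Pp Pm : Finset ℕ) (M0 M1 : KModel)
    (hf0 : Finite M0.W) (hf1 : Finite M1.W)
    (x0 : M0.W) (x1 : M1.W)
    (h0 : ∀ y : M0.W, M0.R x0 y) (h1 : ∀ y : M1.W, M1.R x1 y)
    (y0 z0 : M0.W) (hy0 : M0.Final y0) (hz0 : M0.Final z0)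
    (hne0 : M0.cluster y0 ≠ M0.cluster z0)
    (hcov0 : ∀ u : M0.W, M0.Final u → u ∈ M0.cluster y0 ∨ u ∈ M0.cluster z0)
    (y1 z1 : M1.W) (hy1 : M1.Final y1) (hz1 : M1.Final z1)
    (hne1 : M1.cluster y1 ≠ M1.cluster z1)
    (hcov1 : ∀ u : M1.W, M1.Final u → u ∈ M1.cluster y1 ∨ u ∈ M1.cluster z1)
    (h : ModalArrow Pp Pm 3 M0 x0 M1 x1) :
    ∃ a b : M1.W, M1.Final a ∧ M1.Final b ∧ M1.cluster a ≠ M1.cluster b ∧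
      Matches Pp Pm M0 M1 (M0.cluster y0) (M1.cluster a) ∧
      Matches Pp Pm M0 M1 (M0.cluster z0) (M1.cluster b) := by
  haveI : Finite M0.W := hf0
  haveI : Finite M1.W := hf1
  haveI : Fintype M0.W := Fintype.ofFinite M0.W
  haveI : Fintype M1.W := Fintype.ofFinite M1.W
  -- final worlds of M1 satisfying the β of each M0-cluster
  obtain ⟨f0, hf0fin, hf0β⟩ := exists_final_sat_betaF Pp Pm M0 M1 x0 x1 h0 y0 hy0 h
  obtain ⟨g1, hg1fin, hg1β⟩ := exists_final_sat_betaF Pp Pm M0 M1 x0 x1 h0 z0 hz0 h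
  -- every final cluster of M1 has a member satisfying β0 or β1
  have hsatOr : ∀ u : M0.W, M0.Final u →
      M0.Sat u (betaF Pp Pm M0 y0) ∨ M0.Sat u (betaF Pp Pm M0 z0) := by
    intro u hu
    rcases hcov0 u hu with hmem | hmem
    · exact Or.inl (sat_betaF_self Pp Pm M0 y0 hy0 u hmem)
    · exact Or.inr (sat_betaF_self Pp Pm M0 z0 hz0 u hmem)
  obtain ⟨a, ha_mem, ha⟩ := psi_extract_gen Pp Pm M0 M1 hf0 x0 x1 h1 h
    (betaF Pp Pm M0 y0) (betaF Pp Pm M0 z0)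
    (vpos_betaF Pp Pm M0 y0) (vneg_betaF Pp Pm M0 y0) (depth_betaF Pp Pm M0 y0)
    (vpos_betaF Pp Pm M0 z0) (vneg_betaF Pp Pm M0 z0) (depth_betaF Pp Pm M0 z0)
    hsatOr y1 hy1
  obtain ⟨b, hb_mem, hb⟩ := psi_extract_gen Pp Pm M0 M1 hf0 x0 x1 h1 h
    (betaF Pp Pm M0 y0) (betaF Pp Pm M0 z0)
    (vpos_betaF Pp Pm M0 y0) (vneg_betaF Pp Pm M0 y0) (depth_betaF Pp Pm M0 y0)
    (vpos_betaF Pp Pm M0 z0) (vneg_betaF Pp Pm M0 z0) (depth_betaF Pp Pm M0 z0)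
    hsatOr z1 hz1
  have hafin : M1.Final a := final_of_mem_cluster M1 hy1 ha_mem
  have hbfin : M1.Final b := final_of_mem_cluster M1 hz1 hb_mem
  have hca : M1.cluster y1 = M1.cluster a := cluster_eq_of_mem M1 ha_mem
  have hcb : M1.cluster z1 = M1.cluster b := cluster_eq_of_mem M1 hb_mem
  by_cases hcase : M1.cluster f0 = M1.cluster g1
  · rcases hcov1 f0 hf0fin with hmem | hmem
    · -- cluster f0 = cluster y1
      have e0 : M1.cluster y1 = M1.cluster f0 := cluster_eq_of_mem M1 hmem
      rcases hb with hb0 | hb1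
      · -- b satisfies β(y0); pair (b, g1)
        refine ⟨b, g1, hbfin, hg1fin, ?_, ?_, ?_⟩
        · intro hcontra
          exact hne1 (by rw [hcb, hcontra, ← hcase, ← e0])
        · exact matches_of_sat_betaF Pp Pm M0 M1 y0 b hbfin hb0
        · exact matches_of_sat_betaF Pp Pm M0 M1 z0 g1 hg1fin hg1β
      · -- b satisfies β(z0); pair (f0, b)
        refine ⟨f0, b, hf0fin, hbfin, ?_, ?_, ?_⟩
        · intro hcontra
          exact hne1 (by rw [e0, hcontra, ← hcb])
        · exact matches_of_sat_betaF Pp Pm M0 M1 y0 f0 hf0fin hf0β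
        · exact matches_of_sat_betaF Pp Pm M0 M1 z0 b hbfin hb1
    · -- cluster f0 = cluster z1
      have e0 : M1.cluster z1 = M1.cluster f0 := cluster_eq_of_mem M1 hmem
      rcases ha with ha0 | ha1
      · -- a satisfies β(y0); pair (a, g1)
        refine ⟨a, g1, hafin, hg1fin, ?_, ?_, ?_⟩
        · intro hcontra
          exact hne1 (by rw [hca, hcontra, ← hcase, ← e0])
        · exact matches_of_sat_betaF Pp Pm M0 M1 y0 a hafin ha0
        · exact matches_of_sat_betaF Pp Pm M0 M1 z0 g1 hg1fin hg1β
      · -- a satisfies β(z0); pair (f0, a)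
        refine ⟨f0, a, hf0fin, hafin, ?_, ?_, ?_⟩
        · intro hcontra
          exact hne1 (by rw [hca, ← hcontra, ← e0])
        · exact matches_of_sat_betaF Pp Pm M0 M1 y0 f0 hf0fin hf0β
        · exact matches_of_sat_betaF Pp Pm M0 M1 z0 a hafin ha1
  · exact ⟨f0, g1, hf0fin, hg1fin, hcase,
      matches_of_sat_betaF Pp Pm M0 M1 y0 f0 hf0fin hf0β,
      matches_of_sat_betaF Pp Pm M0 M1 z0 g1 hg1fin hg1β⟩
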